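/- Let n ≥ 1, λ_1,…,λ_n pairwise distinct reals, α_1,…,α_n reals, and let y_1,…,y_n : ℝ × I → ℝ be smooth and nowhere vanishing (I an open interval, 0 ∉ I) satisfying (yxx), (yt) and the constraint (uy). Fix k ∈ {1,…,n} and set f_k := (∂_x y_k + α_k)/(2 y_k). Define (the Bäcklund transformation B_k): ỹ_j := ((∂_x y_j − 2 y_j f_k)² − α_j²)/(4(λ_j − λ_k) y_j) for j ≠ k, and ỹ_k := −y_k + 6t(f_k² + λ_k) − x − Σ_{j≠k}(ỹ_j + y_j); set α̃_j := α_j for j ≠ k and α̃_k := 1 − α_k. If each ỹ_j is nowhere vanishing, then ỹ_1,…,ỹ_n satisfy (yxx), (yt) and the constraint (uy) with parameters α̃_1,…,α̃_n and the same λ_1,…,λ_n. -/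

import Mathlib

open Set Function

noncomputable section

/-- Partial derivative in the first (space) variable. -/
def pdx (u : ℝ → ℝ → ℝ) : ℝ → ℝ → ℝ := fun x t => deriv (fun x' => u x' t) x

/-- Partial derivative in the second (time) variable. -/
def pdt (u : ℝ → ℝ → ℝ) : ℝ → ℝ → ℝ := fun x t => deriv (fun t' => u x t') t

/-- The constraint (uy): `u = x/(6t) + (y₁ + ⋯ + yₙ)/(3t)`. -/
def ucon (n : ℕ) (y : Fin n → ℝ → ℝ → ℝ) : ℝ → ℝ → ℝ :=
  fun x t => x / (6*t) + (∑ j, y j x t) / (3*t)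

section infra
variable {g : ℝ → ℝ → ℝ} {I : Set ℝ}

theorem contDiffAt_of_slice (hIo : IsOpen I) (hg : ContDiffOn ℝ (⊤ : ℕ∞) (uncurry g) (univ ×ˢ I)) {x t : ℝ} (ht : t ∈ I) :
    ContDiffAt ℝ (⊤ : ℕ∞) (uncurry g) (x, t) :=
  hg.contDiffAt ((isOpen_univ.prod hIo).mem_nhds ⟨trivial, ht⟩)

theorem sliceX_contDiff (hIo : IsOpen I) (hg : ContDiffOn ℝ (⊤ : ℕ∞) (uncurry g) (univ ×ˢ I)) {t : ℝ} (ht : t ∈ I) : ContDiff ℝ (⊤ : ℕ∞) (fun x' => g x' t) := by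
  rw [contDiff_iff_contDiffAt]
  intro x
  exact (contDiffAt_of_slice hIo hg ht).comp x (contDiffAt_id.prodMk contDiffAt_const)

theorem hasDerivAt_pdx (hIo : IsOpen I) (hg : ContDiffOn ℝ (⊤ : ℕ∞) (uncurry g) (univ ×ˢ I)) {x t : ℝ} (ht : t ∈ I) :
    HasDerivAt (fun x' => g x' t) (pdx g x t) x :=
  (((sliceX_contDiff hIo hg ht).differentiable (by simp)) x).hasDerivAt

theorem hasDerivAt_pdxx (hIo : IsOpen I) (hg : ContDiffOn ℝ (⊤ : ℕ∞) (uncurry g) (univ ×ˢ I)) {x t : ℝ} (ht : t ∈ I) :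
    HasDerivAt (fun x' => pdx g x' t) (pdx (pdx g) x t) x := by
  have h : ContDiff ℝ (⊤ : ℕ∞) (deriv (fun x' => g x' t)) :=
    (contDiff_infty_iff_deriv.mp (sliceX_contDiff hIo hg ht)).2
  exact ((h.differentiable (by simp)) x).hasDerivAt

theorem hasDerivAt_pdt (hIo : IsOpen I) (hg : ContDiffOn ℝ (⊤ : ℕ∞) (uncurry g) (univ ×ˢ I)) {x t : ℝ} (ht : t ∈ I) :
    HasDerivAt (fun t' => g x t') (pdt g x t) t := by
  have h : DifferentiableAt ℝ (fun t' => g x t') t := by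
    have := ((contDiffAt_of_slice hIo hg ht (x := x)).differentiableAt (by simp))
    exact this.comp t ((differentiableAt_const x).prodMk differentiableAt_id)
  exact h.hasDerivAt

theorem pdx_eq_fderiv (hIo : IsOpen I) (hg : ContDiffOn ℝ (⊤ : ℕ∞) (uncurry g) (univ ×ˢ I)) {x t : ℝ} (ht : t ∈ I) :
    pdx g x t = fderiv ℝ (uncurry g) (x, t) (1, 0) := by
  have h1 : HasDerivAt (fun x' : ℝ => ((x', t) : ℝ × ℝ)) ((1:ℝ), (0:ℝ)) x :=
    (hasDerivAt_id x).prodMk (hasDerivAt_const x t)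
  exact (((contDiffAt_of_slice hIo hg ht).differentiableAt
    (by simp)).hasFDerivAt.comp_hasDerivAt x h1).deriv

theorem pdt_eq_fderiv (hIo : IsOpen I) (hg : ContDiffOn ℝ (⊤ : ℕ∞) (uncurry g) (univ ×ˢ I)) {x t : ℝ} (ht : t ∈ I) :
    pdt g x t = fderiv ℝ (uncurry g) (x, t) (0, 1) := by
  have h1 : HasDerivAt (fun t' : ℝ => ((x, t') : ℝ × ℝ)) ((0:ℝ), (1:ℝ)) t :=
    (hasDerivAt_const t x).prodMk (hasDerivAt_id t)
  exact (((contDiffAt_of_slice hIo hg ht).differentiableAt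
    (by simp)).hasFDerivAt.comp_hasDerivAt t h1).deriv

theorem hasDerivAt_pdxt (hIo : IsOpen I) (hg : ContDiffOn ℝ (⊤ : ℕ∞) (uncurry g) (univ ×ˢ I)) {x t : ℝ} (ht : t ∈ I) :
    HasDerivAt (fun t' => pdx g x t') (pdt (pdx g) x t) t ∧
      pdt (pdx g) x t = pdx (pdt g) x t := by
  set f := uncurry g with hf
  have hf2 : ContDiffAt ℝ (⊤ : ℕ∞) (fderiv ℝ f) (x, t) :=
    (contDiffAt_of_slice hIo hg ht).fderiv_right (by simp)
  have hdf : HasFDerivAt (fderiv ℝ f) (fderiv ℝ (fderiv ℝ f) (x, t)) (x, t) :=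
    (hf2.differentiableAt (by simp)).hasFDerivAt
  -- t-direction derivative of x-partial
  have h2 : HasDerivAt (fun t' : ℝ => ((x, t') : ℝ × ℝ)) ((0:ℝ), (1:ℝ)) t :=
    (hasDerivAt_const t x).prodMk (hasDerivAt_id t)
  have h3 : HasDerivAt (fun t' => fderiv ℝ f (x, t')) (fderiv ℝ (fderiv ℝ f) (x, t) (0, 1)) t :=
    hdf.comp_hasDerivAt t h2
  have h4 : HasDerivAt (fun t' => fderiv ℝ f (x, t') (1, 0))
      (fderiv ℝ (fderiv ℝ f) (x, t) (0, 1) (1, 0)) t :=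
    (ContinuousLinearMap.apply ℝ ℝ ((1:ℝ), (0:ℝ))).hasFDerivAt.comp_hasDerivAt t h3
  have h5 : HasDerivAt (fun t' => pdx g x t')
      (fderiv ℝ (fderiv ℝ f) (x, t) (0, 1) (1, 0)) t := by
    apply h4.congr_of_eventuallyEq
    filter_upwards [hIo.mem_nhds ht] with t' ht'
    exact pdx_eq_fderiv hIo hg ht'
  -- x-direction derivative of t-partial
  have h2' : HasDerivAt (fun x' : ℝ => ((x', t) : ℝ × ℝ)) ((1:ℝ), (0:ℝ)) x :=
    (hasDerivAt_id x).prodMk (hasDerivAt_const x t)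
  have h3' : HasDerivAt (fun x' => fderiv ℝ f (x', t)) (fderiv ℝ (fderiv ℝ f) (x, t) (1, 0)) x :=
    hdf.comp_hasDerivAt x h2'
  have h4' : HasDerivAt (fun x' => fderiv ℝ f (x', t) (0, 1))
      (fderiv ℝ (fderiv ℝ f) (x, t) (1, 0) (0, 1)) x :=
    (ContinuousLinearMap.apply ℝ ℝ ((0:ℝ), (1:ℝ))).hasFDerivAt.comp_hasDerivAt x h3'
  have h5' : HasDerivAt (fun x' => pdt g x' t)
      (fderiv ℝ (fderiv ℝ f) (x, t) (1, 0) (0, 1)) x := by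
    apply h4'.congr_of_eventuallyEq
    filter_upwards [Filter.univ_mem] with x' _
    exact pdt_eq_fderiv hIo hg ht
  have hsym := ((contDiffAt_of_slice hIo hg ht (x := x)).isSymmSndFDerivAt (by rw [minSmoothness_of_isRCLikeNormedField]; exact WithTop.coe_le_coe.mpr le_top)).eq
    ((0:ℝ), (1:ℝ)) ((1:ℝ), (0:ℝ))
  constructor
  · have : pdt (pdx g) x t = fderiv ℝ (fderiv ℝ f) (x, t) (0, 1) (1, 0) := h5.deriv
    rw [this]; exact h5
  · have e1 : pdt (pdx g) x t = fderiv ℝ (fderiv ℝ f) (x, t) (0, 1) (1, 0) := h5.deriv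
    have e2 : pdx (pdt g) x t = fderiv ℝ (fderiv ℝ f) (x, t) (1, 0) (0, 1) := h5'.deriv
    rw [e1, e2]; exact hsym

end infra

set_option maxHeartbeats 2000000 in
/-- the Bäcklund transformation `B_k` (built from `f_k = (∂ₓy_k + α_k)/(2y_k)`)
maps solutions of (yxx), (yt), (uy) with parameters `α` to solutions with parameters `α̃`,
where `α̃_k = 1 − α_k` and `α̃_j = α_j` for `j ≠ k`. -/
theorem statement13
    (n : ℕ) (hn : 1 ≤ n)
    (lam alp : Fin n → ℝ) (hlam : Function.Injective lam)
    (a b : ℝ) (I : Set ℝ) (hI : I = Set.Ioo a b) (hI0 : (0:ℝ) ∉ I)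
    (y : Fin n → ℝ → ℝ → ℝ)
    (hysmooth : ∀ j, ContDiffOn ℝ (⊤ : ℕ∞) (uncurry (y j)) (univ ×ˢ I))
    (hyne : ∀ j x t, t ∈ I → y j x t ≠ 0)
    -- system (yxx)
    (hyxx : ∀ j x t, t ∈ I →
      pdx (pdx (y j)) x t
        = ((pdx (y j) x t)^2 - (alp j)^2) / (2 * y j x t)
          + 2 * (ucon n y x t - lam j) * y j x t)
    -- system (yt)
    (hyt : ∀ j x t, t ∈ I →
      pdt (y j) x t
        = 2 * pdx (ucon n y) x t * y j x t
          - 2 * (ucon n y x t + 2 * lam j) * pdx (y j) x t)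
    -- the auxiliary function f_k
    (k : Fin n)
    (fk : ℝ → ℝ → ℝ)
    (hfk : ∀ x t, fk x t = (pdx (y k) x t + alp k) / (2 * y k x t))
    -- the transformed functions ỹ and parameters α̃
    (ny : Fin n → ℝ → ℝ → ℝ)
    (hny : ∀ j, j ≠ k → ∀ x t,
      ny j x t = ((pdx (y j) x t - 2 * y j x t * fk x t)^2 - (alp j)^2)
                  / (4 * (lam j - lam k) * y j x t))
    (hnyk : ∀ x t,
      ny k x t = -(y k x t) + 6*t*((fk x t)^2 + lam k) - x
                  - ∑ j ∈ Finset.univ.erase k, (ny j x t + y j x t))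
    (nalp : Fin n → ℝ)
    (hnalp : ∀ j, j ≠ k → nalp j = alp j) (hnalpk : nalp k = 1 - alp k)
    -- assuming the transformed functions are nowhere vanishing
    (hnyne : ∀ j x t, t ∈ I → ny j x t ≠ 0) :
    -- ỹ satisfies (yxx) and (yt) with ũ given by the constraint (uy) for ỹ
    (∀ j x t, t ∈ I →
      pdx (pdx (ny j)) x t
        = ((pdx (ny j) x t)^2 - (nalp j)^2) / (2 * ny j x t)
          + 2 * (ucon n ny x t - lam j) * ny j x t)
    ∧ (∀ j x t, t ∈ I →
      pdt (ny j) x t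
        = 2 * pdx (ucon n ny) x t * ny j x t
          - 2 * (ucon n ny x t + 2 * lam j) * pdx (ny j) x t) := by
  have hIo : IsOpen I := by rw [hI]; exact isOpen_Ioo
  have htne : ∀ {t : ℝ}, t ∈ I → t ≠ 0 := fun {t} ht h => hI0 (h ▸ ht)
  have hlamne : ∀ j, j ≠ k → lam j - lam k ≠ 0 := fun j hj =>
    sub_ne_zero.mpr fun h => hj (hlam h)
  -- smoothness of u
  have hUsm : ContDiffOn ℝ (⊤ : ℕ∞) (uncurry (ucon n y)) (univ ×ˢ I) := by
    have e : uncurry (ucon n y)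
        = fun p : ℝ × ℝ => p.1 / (6 * p.2) + (∑ j, y j p.1 p.2) / (3 * p.2) := rfl
    rw [e]
    have h6 : ∀ p : ℝ × ℝ, p ∈ univ ×ˢ I → (6:ℝ) * p.2 ≠ 0 := by
      rintro ⟨px, pt⟩ ⟨-, hpt⟩
      exact mul_ne_zero (by norm_num) (htne hpt)
    have h3 : ∀ p : ℝ × ℝ, p ∈ univ ×ˢ I → (3:ℝ) * p.2 ≠ 0 := by
      rintro ⟨px, pt⟩ ⟨-, hpt⟩
      exact mul_ne_zero (by norm_num) (htne hpt)
    exact (ContDiffOn.div contDiff_fst.contDiffOn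
        ((contDiff_const.mul contDiff_snd).contDiffOn) h6).add
      (ContDiffOn.div (ContDiffOn.sum fun j _ => hysmooth j)
        ((contDiff_const.mul contDiff_snd).contDiffOn) h3)
  -- basic derivative facts
  have hYd : ∀ j (x t : ℝ), t ∈ I → HasDerivAt (fun x' => y j x' t) (pdx (y j) x t) x :=
    fun j x t ht => hasDerivAt_pdx hIo (hysmooth j) ht
  have hYdd : ∀ j (x t : ℝ), t ∈ I →
      HasDerivAt (fun x' => pdx (y j) x' t) (pdx (pdx (y j)) x t) x :=
    fun j x t ht => hasDerivAt_pdxx hIo (hysmooth j) ht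
  have hUd : ∀ (x t : ℝ), t ∈ I → HasDerivAt (fun x' => ucon n y x' t) (pdx (ucon n y) x t) x :=
    fun x t ht => hasDerivAt_pdx hIo hUsm ht
  have hUdd : ∀ (x t : ℝ), t ∈ I →
      HasDerivAt (fun x' => pdx (ucon n y) x' t) (pdx (pdx (ucon n y)) x t) x :=
    fun x t ht => hasDerivAt_pdxx hIo hUsm ht
  have hYtd : ∀ j (x t : ℝ), t ∈ I → HasDerivAt (fun t' => y j x t') (pdt (y j) x t) t :=
    fun j x t ht => hasDerivAt_pdt hIo (hysmooth j) ht
  have hPtd : ∀ j (x t : ℝ), t ∈ I →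
      HasDerivAt (fun t' => pdx (y j) x t') (pdt (pdx (y j)) x t) t :=
    fun j x t ht => (hasDerivAt_pdxt hIo (hysmooth j) ht).1
  have hclair : ∀ j (x t : ℝ), t ∈ I → pdt (pdx (y j)) x t = pdx (pdt (y j)) x t :=
    fun j x t ht => (hasDerivAt_pdxt hIo (hysmooth j) ht).2
  -- sum identities
  have hsy : ∀ (x t : ℝ), t ∈ I → ∑ j, y j x t = 3*t*(ucon n y x t) - x/2 := by
    intro x t ht
    have h := htne ht
    simp only [ucon]
    field_simp
    try ring
  have hsny : ∀ (x t : ℝ), t ∈ I → ∑ j, ny j x t = 3*t*(ucon n ny x t) - x/2 := by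
    intro x t ht
    have h := htne ht
    simp only [ucon]
    field_simp
    try ring
  have hu1 : ∀ (x t : ℝ), t ∈ I →
      pdx (ucon n y) x t = 1/(6*t) + (∑ j, pdx (y j) x t)/(3*t) := by
    intro x t ht
    have hD : HasDerivAt (fun x' => ucon n y x' t)
        (1/(6*t) + (∑ j, pdx (y j) x t)/(3*t)) x := by
      have e : (fun x' => ucon n y x' t) = fun x' => x'/(6*t) + (∑ j, y j x' t)/(3*t) := rfl
      rw [e]
      exact ((hasDerivAt_id x).div_const (6*t)).add
        ((HasDerivAt.fun_sum fun j _ => hYd j x t ht).div_const (3*t))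
    exact hD.deriv
  have hsp : ∀ (x t : ℝ), t ∈ I →
      ∑ j, pdx (y j) x t = 3*t*(pdx (ucon n y) x t) - 1/2 := by
    intro x t ht
    have h := htne ht
    rw [hu1 x t ht]
    field_simp
    try ring
  have hu2 : ∀ (x t : ℝ), t ∈ I →
      pdx (pdx (ucon n y)) x t = (∑ j, pdx (pdx (y j)) x t)/(3*t) := by
    intro x t ht
    have hD : HasDerivAt (fun x' => pdx (ucon n y) x' t)
        ((∑ j, pdx (pdx (y j)) x t)/(3*t)) x := by
      have e : (fun x' => pdx (ucon n y) x' t)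
          = fun x' => 1/(6*t) + (∑ j, pdx (y j) x' t)/(3*t) :=
        funext fun x' => hu1 x' t ht
      rw [e]
      exact ((hasDerivAt_const x (1/(6*t))).add
        ((HasDerivAt.fun_sum (u := Finset.univ) fun j _ => hYdd j x t ht).div_const (3*t))).congr_deriv (zero_add _)
    exact hD.deriv
  have hs2 : ∀ (x t : ℝ), t ∈ I →
      ∑ j, pdx (pdx (y j)) x t = 3*t*(pdx (pdx (ucon n y)) x t) := by
    intro x t ht
    have h := htne ht
    rw [hu2 x t ht]
    field_simp
  -- fk facts
  have hpk : ∀ (x t : ℝ), t ∈ I → pdx (y k) x t = 2*fk x t*(y k x t) - alp k := by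
    intro x t ht
    have h := hyne k x t ht
    rw [hfk x t]
    field_simp
    try ring
  have hfd : ∀ (x t : ℝ), t ∈ I →
      HasDerivAt (fun x' => fk x' t) (ucon n y x t - lam k - (fk x t)^2) x := by
    intro x t ht
    have hk0 := hyne k x t ht
    have e : (fun x' => fk x' t) = fun x' => (pdx (y k) x' t + alp k)/(2*y k x' t) :=
      funext fun x' => hfk x' t
    rw [e]
    have hD := ((hYdd k x t ht).add_const (alp k)).div ((hYd k x t ht).const_mul 2)
      (mul_ne_zero two_ne_zero hk0)
    refine hD.congr_deriv (Eq.symm ?_)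
    rw [hyxx k x t ht, hpk x t ht, hfk x t]
    field_simp
    try ring
  -- first derivative of transformed functions, j ≠ k
  have hq : ∀ j, j ≠ k → ∀ (x t : ℝ), t ∈ I →
      HasDerivAt (fun x' => ny j x' t)
        (2*fk x t*(y j x t - ny j x t) - pdx (y j) x t) x := by
    intro j hj x t ht
    have hj0 := hyne j x t ht
    have hl := hlamne j hj
    have e : (fun x' => ny j x' t) = fun x' =>
        ((pdx (y j) x' t - 2*y j x' t*fk x' t)^2 - alp j^2)/(4*(lam j - lam k)*y j x' t) := by
      funext x'
      rw [hny j hj x' t]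
      try ring_nf
    rw [e]
    have hD := ((((hYdd j x t ht).sub
        (((hYd j x t ht).const_mul 2).mul (hfd x t ht))).pow 2).sub_const (alp j^2)).div
      ((hYd j x t ht).const_mul (4*(lam j - lam k)))
      (mul_ne_zero (mul_ne_zero (by norm_num) hl) hj0)
    refine hD.congr_deriv (Eq.symm ?_)
    simp only [Pi.sub_apply, Pi.mul_apply, Pi.pow_apply, Pi.add_apply, Pi.neg_apply]
    rw [hny j hj x t, hyxx j x t ht]
    field_simp
    try ring
  -- the transformed constraint function
  have huu : ∀ (x t : ℝ), t ∈ I →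
      ucon n ny x t = 2*(fk x t)^2 + 2*lam k - ucon n y x t := by
    intro x t ht
    have h := htne ht
    have hS : (∑ j, ny j x t) + (∑ j, y j x t) = 6*t*((fk x t)^2 + lam k) - x := by
      rw [← Finset.add_sum_erase _ (fun j => ny j x t) (Finset.mem_univ k),
        ← Finset.add_sum_erase _ (fun j => y j x t) (Finset.mem_univ k), hnyk x t,
        Finset.sum_add_distrib]
      try ring
    have hSny : ∑ j, ny j x t = 6*t*((fk x t)^2 + lam k) - x - ∑ j, y j x t := by
      linarith [hS]
    simp only [ucon]
    rw [hSny]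
    field_simp
    try ring
  have hUtd : ∀ (x t : ℝ), t ∈ I → HasDerivAt (fun x' => ucon n ny x' t)
      (4*fk x t*(ucon n y x t - lam k - (fk x t)^2) - pdx (ucon n y) x t) x := by
    intro x t ht
    have e : (fun x' => ucon n ny x' t) = fun x' => 2*(fk x' t)^2 + 2*lam k - ucon n y x' t :=
      funext fun x' => huu x' t ht
    rw [e]
    have hD := ((((hfd x t ht).pow 2).const_mul 2).add_const (2*lam k)).sub (hUd x t ht)
    refine hD.congr_deriv (Eq.symm ?_)
    norm_num
    try ring
  -- first derivative of transformed function at k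
  have hqk : ∀ (x t : ℝ), t ∈ I → HasDerivAt (fun x' => ny k x' t)
      (alp k - 1 - 2*fk x t*ny k x t) x := by
    intro x t ht
    have h := htne ht
    have e : (fun x' => ny k x' t) = fun x' => -(y k x' t) + 6*t*((fk x' t)^2 + lam k) - x' -
        ∑ j ∈ Finset.univ.erase k, (ny j x' t + y j x' t) := funext fun x' => hnyk x' t
    rw [e]
    have hD1 : HasDerivAt (fun x' => 6*t*((fk x' t)^2 + lam k))
        (6*t*(2*fk x t*(ucon n y x t - lam k - (fk x t)^2))) x := by
      have h1 := (((hfd x t ht).pow 2).add_const (lam k)).const_mul (6*t)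
      refine h1.congr_deriv (Eq.symm ?_)
      norm_num
      try ring
    have hD2 : HasDerivAt (fun x' => ∑ j ∈ Finset.univ.erase k, (ny j x' t + y j x' t))
        (∑ j ∈ Finset.univ.erase k,
          (2*fk x t*(y j x t - ny j x t) - pdx (y j) x t + pdx (y j) x t)) x :=
      HasDerivAt.fun_sum fun j hjm =>
        (hq j (Finset.ne_of_mem_erase hjm) x t ht).add (hYd j x t ht)
    have hD := (((hYd k x t ht).neg.add hD1).sub (hasDerivAt_id x)).sub hD2
    refine hD.congr_deriv (Eq.symm ?_)
    have hsum : ∑ j ∈ Finset.univ.erase k,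
        (2*fk x t*(y j x t - ny j x t) - pdx (y j) x t + pdx (y j) x t)
        = 2*fk x t*(((∑ j, y j x t) - y k x t) - ((∑ j, ny j x t) - ny k x t)) := by
      rw [Finset.sum_congr rfl (fun j _ => by ring :
        ∀ j ∈ Finset.univ.erase k,
          (2*fk x t*(y j x t - ny j x t) - pdx (y j) x t + pdx (y j) x t)
          = 2*fk x t*y j x t - 2*fk x t*ny j x t),
        Finset.sum_sub_distrib, ← Finset.mul_sum, ← Finset.mul_sum,
        Finset.sum_erase_eq_sub (Finset.mem_univ k), Finset.sum_erase_eq_sub (Finset.mem_univ k)]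
      try ring
    rw [hsum, hsy x t ht, hsny x t ht, huu x t ht, hpk x t ht]
    norm_num
    try ring
  -- (yxx) for the transformed system
  have goal1 : ∀ j x t, t ∈ I →
      pdx (pdx (ny j)) x t
        = ((pdx (ny j) x t)^2 - (nalp j)^2) / (2 * ny j x t)
          + 2 * (ucon n ny x t - lam j) * ny j x t := by
    intro j x t ht
    rcases eq_or_ne j k with hjk | hj
    · replace hjk := hjk.symm
      subst hjk
      have hn0 := hnyne k x t ht
      have e : (fun x' => pdx (ny k) x' t)
          = fun x' => alp k - 1 - 2*fk x' t*ny k x' t :=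
        funext fun x' => (hqk x' t ht).deriv
      have hD : HasDerivAt (fun x' => pdx (ny k) x' t)
          (-(2*(ucon n y x t - lam k - (fk x t)^2)*ny k x t
            + 2*fk x t*(alp k - 1 - 2*fk x t*ny k x t))) x := by
        rw [e]
        have := (hasDerivAt_const x (alp k - 1)).sub
          (((hfd x t ht).const_mul 2).mul (hqk x t ht))
        refine this.congr_deriv (Eq.symm ?_)
        try ring
      have h2 : pdx (pdx (ny k)) x t = -(2*(ucon n y x t - lam k - (fk x t)^2)*ny k x t
            + 2*fk x t*(alp k - 1 - 2*fk x t*ny k x t)) := hD.deriv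
      have h3 : pdx (ny k) x t = alp k - 1 - 2*fk x t*ny k x t := (hqk x t ht).deriv
      rw [h2, h3, hnalpk, huu x t ht]
      field_simp
      try ring
    · -- j ≠ k
      have hj0 := hyne j x t ht
      have hl := hlamne j hj
      have hn0 := hnyne j x t ht
      have e : (fun x' => pdx (ny j) x' t)
          = fun x' => 2*fk x' t*(y j x' t - ny j x' t) - pdx (y j) x' t :=
        funext fun x' => (hq j hj x' t ht).deriv
      have hD : HasDerivAt (fun x' => pdx (ny j) x' t)
          (2*(ucon n y x t - lam k - (fk x t)^2)*(y j x t - ny j x t)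
            + 2*fk x t*(pdx (y j) x t - (2*fk x t*(y j x t - ny j x t) - pdx (y j) x t))
            - pdx (pdx (y j)) x t) x := by
        rw [e]
        have := (((hfd x t ht).const_mul 2).mul ((hYd j x t ht).sub (hq j hj x t ht))).sub
          (hYdd j x t ht)
        refine this.congr_deriv (Eq.symm ?_)
        simp only [Pi.sub_apply, Pi.mul_apply, Pi.pow_apply, Pi.add_apply, Pi.neg_apply]
        try ring
      have h2 := hD.deriv
      have h3 : pdx (ny j) x t = 2*fk x t*(y j x t - ny j x t) - pdx (y j) x t :=
        (hq j hj x t ht).deriv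
      have hnum : (pdx (y j) x t - 2 * y j x t * fk x t)^2 - (alp j)^2 ≠ 0 := by
        intro h0
        apply hn0
        rw [hny j hj x t, h0, zero_div]
      rw [show pdx (pdx (ny j)) x t = _ from h2, h3, hnalp j hj, huu x t ht]
      rw [hny j hj x t]
      rw [hyxx j x t ht]
      have hnum' : (pdx (y j) x t - 2 * fk x t * y j x t)^2 - (alp j)^2 ≠ 0 := by
        rwa [mul_right_comm] at hnum
      field_simp [hj0, hl, hnum, hnum']
      ring
  -- mixed partials
  have hmix : ∀ j (x t : ℝ), t ∈ I → pdt (pdx (y j)) x t =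
      2*pdx (pdx (ucon n y)) x t*y j x t - 2*(ucon n y x t + 2*lam j)*pdx (pdx (y j)) x t := by
    intro j x t ht
    rw [hclair j x t ht]
    have e : (fun x' => pdt (y j) x' t) = fun x' =>
        2*pdx (ucon n y) x' t*y j x' t - 2*(ucon n y x' t + 2*lam j)*pdx (y j) x' t :=
      funext fun x' => hyt j x' t ht
    have hD : HasDerivAt (fun x' => pdt (y j) x' t)
        (2*pdx (pdx (ucon n y)) x t*y j x t
          - 2*(ucon n y x t + 2*lam j)*pdx (pdx (y j)) x t) x := by
      rw [e]
      have := (((hUdd x t ht).const_mul 2).mul (hYd j x t ht)).sub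
        ((((hUd x t ht).add_const (2*lam j)).const_mul 2).mul (hYdd j x t ht))
      refine this.congr_deriv (Eq.symm ?_)
      try ring
    exact hD.deriv
  -- time derivative of fk
  have hftd : ∀ (x t : ℝ), t ∈ I → HasDerivAt (fun t' => fk x t')
      (pdx (pdx (ucon n y)) x t - 2*fk x t*pdx (ucon n y) x t
        - 2*(ucon n y x t + 2*lam k)*(ucon n y x t - lam k - (fk x t)^2)) t := by
    intro x t ht
    have hk0 := hyne k x t ht
    have e : (fun t' => fk x t') = fun t' => (pdx (y k) x t' + alp k)/(2*y k x t') :=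
      funext fun t' => hfk x t'
    rw [e]
    have hD := ((hPtd k x t ht).add_const (alp k)).div ((hYtd k x t ht).const_mul 2)
      (mul_ne_zero two_ne_zero hk0)
    refine hD.congr_deriv (Eq.symm ?_)
    rw [hmix k x t ht, hyt k x t ht, hyxx k x t ht, hpk x t ht]
    field_simp
    try ring
  -- time derivative of transformed functions, j ≠ k
  have hnytd : ∀ j, j ≠ k → ∀ (x t : ℝ), t ∈ I → HasDerivAt (fun t' => ny j x t')
      (2 * pdx (ucon n ny) x t * ny j x t
        - 2 * (ucon n ny x t + 2 * lam j) * pdx (ny j) x t) t := by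
    intro j hj x t ht
    have hj0 := hyne j x t ht
    have hl := hlamne j hj
    have e : (fun t' => ny j x t') = fun t' =>
        ((pdx (y j) x t' - 2*y j x t'*fk x t')^2 - alp j^2)/(4*(lam j - lam k)*y j x t') := by
      funext t'
      rw [hny j hj x t']
      try ring_nf
    rw [e]
    have hD := ((((hPtd j x t ht).sub
        (((hYtd j x t ht).const_mul 2).mul (hftd x t ht))).pow 2).sub_const (alp j^2)).div
      ((hYtd j x t ht).const_mul (4*(lam j - lam k)))
      (mul_ne_zero (mul_ne_zero (by norm_num) hl) hj0)
    refine hD.congr_deriv (Eq.symm ?_)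
    simp only [Pi.sub_apply, Pi.mul_apply, Pi.pow_apply, Pi.add_apply, Pi.neg_apply]
    have hut1 : pdx (ucon n ny) x t
        = 4*fk x t*(ucon n y x t - lam k - (fk x t)^2) - pdx (ucon n y) x t :=
      (hUtd x t ht).deriv
    have hqj : pdx (ny j) x t = 2*fk x t*(y j x t - ny j x t) - pdx (y j) x t :=
      (hq j hj x t ht).deriv
    rw [hmix j x t ht, hyt j x t ht, hut1, huu x t ht, hqj, hyxx j x t ht, hny j hj x t]
    field_simp
    try ring
  -- (yt) for the transformed system
  have goal2 : ∀ j x t, t ∈ I →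
      pdt (ny j) x t
        = 2 * pdx (ucon n ny) x t * ny j x t
          - 2 * (ucon n ny x t + 2 * lam j) * pdx (ny j) x t := by
    intro j x t ht
    rcases eq_or_ne j k with hjk | hj
    · replace hjk := hjk.symm
      subst hjk
      have h := htne ht
      have hk0 := hyne k x t ht
      have hnk0 := hnyne k x t ht
      have e : (fun t' => ny k x t') = fun t' => -(y k x t') + 6*t'*((fk x t')^2 + lam k) - x -
          ∑ j ∈ Finset.univ.erase k, (ny j x t' + y j x t') := funext fun t' => hnyk x t'
      have hD1 : HasDerivAt (fun t' => 6*t'*((fk x t')^2 + lam k))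
          (6*((fk x t)^2 + lam k)
              + 6*t*(2*fk x t*(pdx (pdx (ucon n y)) x t - 2*fk x t*pdx (ucon n y) x t
                - 2*(ucon n y x t + 2*lam k)*(ucon n y x t - lam k - (fk x t)^2)))) t := by
        have hA : HasDerivAt (fun t' : ℝ => 6*t') (6:ℝ) t := by
          simpa using (hasDerivAt_id t).const_mul (6:ℝ)
        have h1 := hA.mul (((hftd x t ht).pow 2).add_const (lam k))
        refine h1.congr_deriv (Eq.symm ?_)
        norm_num
        try ring
      have hD2 : HasDerivAt (fun t' => ∑ j ∈ Finset.univ.erase k, (ny j x t' + y j x t'))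
          (∑ j ∈ Finset.univ.erase k,
            ((2 * pdx (ucon n ny) x t * ny j x t
              - 2 * (ucon n ny x t + 2 * lam j) * pdx (ny j) x t) + pdt (y j) x t)) t :=
        HasDerivAt.fun_sum fun j hjm =>
          (hnytd j (Finset.ne_of_mem_erase hjm) x t ht).add (hYtd j x t ht)
      have hD : HasDerivAt (fun t' => ny k x t')
          (-(pdt (y k) x t) + (6*((fk x t)^2 + lam k)
              + 6*t*(2*fk x t*(pdx (pdx (ucon n y)) x t - 2*fk x t*pdx (ucon n y) x t
                - 2*(ucon n y x t + 2*lam k)*(ucon n y x t - lam k - (fk x t)^2))))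
            - x*0 - ∑ j ∈ Finset.univ.erase k,
              ((2 * pdx (ucon n ny) x t * ny j x t
                - 2 * (ucon n ny x t + 2 * lam j) * pdx (ny j) x t) + pdt (y j) x t)) t := by
        rw [e]
        have h1 := (((hYtd k x t ht).neg.add hD1).sub (hasDerivAt_const t x)).sub hD2
        refine h1.congr_deriv (Eq.symm ?_)
        try ring
      have h2 : pdt (ny k) x t
          = -(pdt (y k) x t) + (6*((fk x t)^2 + lam k)
              + 6*t*(2*fk x t*(pdx (pdx (ucon n y)) x t - 2*fk x t*pdx (ucon n y) x t
                - 2*(ucon n y x t + 2*lam k)*(ucon n y x t - lam k - (fk x t)^2))))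
            - x*0 - ∑ j ∈ Finset.univ.erase k,
              ((2 * pdx (ucon n ny) x t * ny j x t
                - 2 * (ucon n ny x t + 2 * lam j) * pdx (ny j) x t) + pdt (y j) x t) := hD.deriv
      -- rewrite the sum
      have hut1 : pdx (ucon n ny) x t
          = 4*fk x t*(ucon n y x t - lam k - (fk x t)^2) - pdx (ucon n y) x t :=
        (hUtd x t ht).deriv
      have hqk' : pdx (ny k) x t = alp k - 1 - 2*fk x t*ny k x t := (hqk x t ht).deriv
      have hsig : ∀ j ∈ Finset.univ.erase k,
          ((2 * pdx (ucon n ny) x t * ny j x t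
            - 2 * (ucon n ny x t + 2 * lam j) * pdx (ny j) x t) + pdt (y j) x t)
          = (2*pdx (ucon n ny) x t + 4*fk x t*ucon n ny x t + 8*fk x t*lam k) * ny j x t
            + (2*pdx (ucon n y) x t - 4*fk x t*ucon n ny x t - 8*fk x t*lam k
                - 8*fk x t*(ucon n y x t - lam k - (fk x t)^2)) * y j x t
            + (2*ucon n ny x t - 2*ucon n y x t - 8*(fk x t)^2) * pdx (y j) x t
            + (4*fk x t) * pdx (pdx (y j)) x t := by
        intro j hjm
        have hj := Finset.ne_of_mem_erase hjm
        have hj0 := hyne j x t ht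
        have hl := hlamne j hj
        have hqj : pdx (ny j) x t = 2*fk x t*(y j x t - ny j x t) - pdx (y j) x t :=
          (hq j hj x t ht).deriv
        rw [hyt j x t ht, hqj, hny j hj x t, hyxx j x t ht]
        field_simp
        try ring
      rw [h2, Finset.sum_congr rfl hsig]
      rw [Finset.sum_add_distrib, Finset.sum_add_distrib, Finset.sum_add_distrib,
        ← Finset.mul_sum, ← Finset.mul_sum, ← Finset.mul_sum, ← Finset.mul_sum,
        Finset.sum_erase_eq_sub (Finset.mem_univ k), Finset.sum_erase_eq_sub (Finset.mem_univ k),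
        Finset.sum_erase_eq_sub (Finset.mem_univ k), Finset.sum_erase_eq_sub (Finset.mem_univ k)]
      rw [hsy x t ht, hsny x t ht, hsp x t ht, hs2 x t ht, hyt k x t ht, hqk', hut1,
        huu x t ht, hyxx k x t ht, hpk x t ht]
      field_simp
      try ring
    · exact (hnytd j hj x t ht).deriv
  exact ⟨goal1, goal2⟩
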